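/- arXiv:1801.02275 — 11 statements merged into one kernel-verified Lean document; each statement's English description precedes it below -/
import Mathlib

section
/- (Theorem 3.3(1), existence) If h = f, then the basis vector e(0,1,0) of M satisfies A₋ e(0,1,0) = c₊ e(0,1,0) = c₋ e(0,1,0) = 0; that is, e(0,1,0) is a singular vector at level 1 of the Verma module M(h,f). -/
/-!
Verma module `M(h,f)` over the ℤ₂×ℤ₂ graded superalgebra of Rittenberg–Wyler,
realized on the space of finitely supported functions `ℕ × Fin 2 × Fin 2 →₀ ℂ`,
with basis vectors `e k μ ν`.
-/

noncomputable section

/-- Index set for the basis of the Verma module. -/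
abbrev Idx : Type := ℕ × Fin 2 × Fin 2

/-- The underlying space of the Verma module `M(h,f)`. -/
abbrev Mmod : Type := Idx →₀ ℂ

/-- The standard basis vector `e(k,μ,ν)`. -/
def e (k : ℕ) (μ ν : Fin 2) : Mmod := Finsupp.single (k, μ, ν) 1

/-- Build a linear operator on `Mmod` from its values on basis vectors. -/
def mkOp (φ : Idx → Mmod) : Mmod →ₗ[ℂ] Mmod := Finsupp.lift Mmod ℂ Idx φ

/-- The lowering operator `A₋`.
`A₋ e(k,μ,ν) = 4k(h+k+μ+ν−1)·e(k−1,μ,ν) + 4(h+f)·δ_{μ,1}δ_{ν,1}·e(k,0,0)`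
(with the convention `e(−1,μ,ν) = 0`, automatic since the coefficient vanishes at `k = 0`). -/
def Am (h f : ℂ) : Mmod →ₗ[ℂ] Mmod :=
  mkOp fun p =>
    (4 * (p.1 : ℂ) * (h + (p.1 : ℂ) + ((p.2.1 : ℕ) : ℂ) + ((p.2.2 : ℕ) : ℂ) - 1))
        • e (p.1 - 1) p.2.1 p.2.2
    + (if p.2.1 = 1 ∧ p.2.2 = 1 then (4 * (h + f)) • e p.1 0 0 else 0)

/-- The lowering operator `c₊`.
`c₊ e(k,μ,ν) = 2(h+2k+2ν−f)·δ_{μ,1}·e(k,0,ν) + (−1)^μ·2k·δ_{ν,0}·e(k−1,μ,1)`. -/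
def cp (h f : ℂ) : Mmod →ₗ[ℂ] Mmod :=
  mkOp fun p =>
    (if p.2.1 = 1 then
        (2 * (h + 2 * (p.1 : ℂ) + 2 * ((p.2.2 : ℕ) : ℂ) - f)) • e p.1 0 p.2.2 else 0)
    + (if p.2.2 = 0 then
        ((-1 : ℂ) ^ (p.2.1 : ℕ) * (2 * (p.1 : ℂ))) • e (p.1 - 1) p.2.1 1 else 0)

/-- The lowering operator `c₋`.
`c₋ e(k,μ,ν) = (−1)^μ·2(h+f)·δ_{ν,1}·e(k,μ,0) + 2k·δ_{μ,0}·e(k−1,1,ν)`. -/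
def cm (h f : ℂ) : Mmod →ₗ[ℂ] Mmod :=
  mkOp fun p =>
    (if p.2.2 = 1 then
        ((-1 : ℂ) ^ (p.2.1 : ℕ) * (2 * (h + f))) • e p.1 p.2.1 0 else 0)
    + (if p.2.1 = 0 then (2 * (p.1 : ℂ)) • e (p.1 - 1) 1 p.2.2 else 0)

/-- The raising operator `A₊`: `A₊ e(k,μ,ν) = e(k+1,μ,ν)`. -/
def Ap : Mmod →ₗ[ℂ] Mmod := mkOp fun p => e (p.1 + 1) p.2.1 p.2.2

/-- The raising operator `d₊`: `d₊ e(k,μ,ν) = δ_{μ,0}·e(k,1,ν)`. -/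
def dp : Mmod →ₗ[ℂ] Mmod := mkOp fun p => if p.2.1 = 0 then e p.1 1 p.2.2 else 0

/-- The raising operator `d₋`:
`d₋ e(k,μ,ν) = (−1)^μ·δ_{ν,0}·e(k,μ,1) + 2·δ_{μ,1}·e(k+1,0,ν)`. -/
def dm : Mmod →ₗ[ℂ] Mmod :=
  mkOp fun p =>
    (if p.2.2 = 0 then ((-1 : ℂ) ^ (p.2.1 : ℕ)) • e p.1 p.2.1 1 else 0)
    + (if p.2.1 = 1 then (2 : ℂ) • e (p.1 + 1) 0 p.2.2 else 0)

/-- The Cartan operator `N`: `N e(k,μ,ν) = (h+2k+μ+ν)·e(k,μ,ν)`. -/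
def Nop (h : ℂ) : Mmod →ₗ[ℂ] Mmod :=
  mkOp fun p =>
    (h + 2 * (p.1 : ℂ) + ((p.2.1 : ℕ) : ℂ) + ((p.2.2 : ℕ) : ℂ)) • e p.1 p.2.1 p.2.2

/-- The Cartan operator `F̃`: `F̃ e(k,μ,ν) = (f+μ−ν)·e(k,μ,ν)`. -/
def Fop (f : ℂ) : Mmod →ₗ[ℂ] Mmod :=
  mkOp fun p =>
    (f + ((p.2.1 : ℕ) : ℂ) - ((p.2.2 : ℕ) : ℂ)) • e p.1 p.2.1 p.2.2

/-- The set of basis vectors of level `m` (the level of `e(k,μ,ν)` is `2k+μ+ν`). -/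
def levelVecs (m : ℕ) : Set Mmod :=
  {v | ∃ (k : ℕ) (μ ν : Fin 2), 2 * k + (μ : ℕ) + (ν : ℕ) = m ∧ v = e k μ ν}

/-- `v` is a singular vector at level `m ≥ 1`: it is nonzero, lies in the span of the
level-`m` basis vectors, and is annihilated by `A₋`, `c₊` and `c₋`. -/
def IsSingular (h f : ℂ) (m : ℕ) (v : Mmod) : Prop :=
  1 ≤ m ∧ v ≠ 0 ∧ v ∈ Submodule.span ℂ (levelVecs m) ∧
    Am h f v = 0 ∧ cp h f v = 0 ∧ cm h f v = 0

lemma mkOp_e (φ : Idx → Mmod) (k : ℕ) (μ ν : Fin 2) :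
    mkOp φ (e k μ ν) = φ (k, μ, ν) := by
  simp [mkOp, e]

/-- Theorem 3.3(1), existence: if `h = f` then `e(0,1,0)` is annihilated by
`A₋`, `c₊`, `c₋`, i.e. it is a singular vector at level 1 of `M(h,f)`. -/
theorem singular_vector_hf (h f : ℂ) (hhf : h = f) :
    Am h f (e 0 1 0) = 0 ∧ cp h f (e 0 1 0) = 0 ∧ cm h f (e 0 1 0) = 0 ∧
      IsSingular h f 1 (e 0 1 0) := by
  subst hhf
  have hA : Am h h (e 0 1 0) = 0 := by
    rw [Am, mkOp_e]; norm_num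
  have hcp : cp h h (e 0 1 0) = 0 := by
    rw [cp, mkOp_e]; norm_num
  have hcm : cm h h (e 0 1 0) = 0 := by
    rw [cm, mkOp_e]; norm_num
  have hne : e 0 1 0 ≠ 0 := by
    simp [e, Finsupp.single_eq_zero]
  have hsp : e 0 1 0 ∈ Submodule.span ℂ (levelVecs 1) :=
    Submodule.subset_span ⟨0, 1, 0, by norm_num, rfl⟩
  exact ⟨hA, hcp, hcm, le_refl 1, hne, hsp, hA, hcp, hcm⟩
end
end

section
/- (Theorem 3.3(2), existence) If h = −f, then the basis vector e(0,0,1) of M satisfies A₋ e(0,0,1) = c₊ e(0,0,1) = c₋ e(0,0,1) = 0; that is, e(0,0,1) is a singular vector at level 1 of the Verma module M(h,f). -/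
/-!
Verma module `M(h,f)` over the ℤ₂×ℤ₂ graded superalgebra of Rittenberg–Wyler,
realized on the space of finitely supported functions `ℕ × Fin 2 × Fin 2 →₀ ℂ`,
with basis vectors `e k μ ν`.
-/

noncomputable section

lemma Am_e001 (h f : ℂ) (hhf : h = -f) : Am h f (e 0 0 1) = 0 := by
  rw [Am, mkOp_e]; norm_num

lemma cp_e001 (h f : ℂ) (hhf : h = -f) : cp h f (e 0 0 1) = 0 := by
  rw [cp, mkOp_e]; norm_num

lemma cm_e001 (h f : ℂ) (hhf : h = -f) : cm h f (e 0 0 1) = 0 := by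
  rw [cm, mkOp_e, hhf]; norm_num

/-- Theorem 3.3(2), existence: if `h = -f` then `e(0,0,1)` is annihilated by
`A₋`, `c₊`, `c₋`, i.e. it is a singular vector at level 1 of `M(h,f)`. -/
theorem singular_vector_h_neg_f (h f : ℂ) (hhf : h = -f) :
    Am h f (e 0 0 1) = 0 ∧ cp h f (e 0 0 1) = 0 ∧ cm h f (e 0 0 1) = 0 ∧
      IsSingular h f 1 (e 0 0 1) := by
  refine ⟨Am_e001 h f hhf, cp_e001 h f hhf, cm_e001 h f hhf,
    le_refl 1, ?_, ?_, Am_e001 h f hhf, cp_e001 h f hhf, cm_e001 h f hhf⟩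
  · simp [e, Finsupp.single_eq_zero]
  · exact Submodule.subset_span ⟨0, 0, 1, by norm_num, rfl⟩
end
end

section
/- (Theorem 3.3(3), existence) If n is a positive integer, h = −n and f ≠ n, then the vector v = e(n,0,0) + (n/(f−n))·e(n−1,1,1) satisfies A₋v = c₊v = c₋v = 0; that is, v is a singular vector at level 2n of the Verma module M(h,f). -/
/-!
Verma module `M(h,f)` over the ℤ₂×ℤ₂ graded superalgebra of Rittenberg–Wyler,
realized on the space of finitely supported functions `ℕ × Fin 2 × Fin 2 →₀ ℂ`,
with basis vectors `e k μ ν`.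
-/

noncomputable section

lemma e_ne_zero (k : ℕ) (μ ν : Fin 2) : e k μ ν ≠ 0 := by
  simp [e]

/-- Theorem 3.3(3), existence: if `n ≥ 1`, `h = -n` and `f ≠ n`, then the vector
`v = e(n,0,0) + (n/(f−n))·e(n−1,1,1)` is annihilated by `A₋`, `c₊`, `c₋`,
i.e. it is a singular vector at level `2n` of `M(h,f)`. -/
theorem singular_vector_even_level (h f : ℂ) (n : ℕ) (hn : 1 ≤ n)
    (hh : h = -(n : ℂ)) (hf : f ≠ (n : ℂ)) :
    Am h f (e n 0 0 + ((n : ℂ) / (f - (n : ℂ))) • e (n - 1) 1 1) = 0 ∧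
    cp h f (e n 0 0 + ((n : ℂ) / (f - (n : ℂ))) • e (n - 1) 1 1) = 0 ∧
    cm h f (e n 0 0 + ((n : ℂ) / (f - (n : ℂ))) • e (n - 1) 1 1) = 0 ∧
    IsSingular h f (2 * n) (e n 0 0 + ((n : ℂ) / (f - (n : ℂ))) • e (n - 1) 1 1) := by
  subst hh
  have hfn : f - (n : ℂ) ≠ 0 := sub_ne_zero.mpr hf
  have hcast : ((n - 1 : ℕ) : ℂ) = (n : ℂ) - 1 := by push_cast [hn]; ring
  have hA : Am (-(n:ℂ)) f (e n 0 0 + ((n : ℂ) / (f - (n : ℂ))) • e (n - 1) 1 1) = 0 := by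
    rw [map_add, map_smul, Am, mkOp_e, mkOp_e]
    simp only [hcast]
    simp [hcast, smul_smul]
    rw [show ((n:ℂ) / (f - ↑n) * (4 * ((n:ℂ) - 1) * (-↑n + (↑n - 1) + 1))) = 0 by ring,
        show ((n:ℂ) / (f - ↑n) * (4 * (-↑n + f))) = 4 * (n:ℂ) by field_simp; ring]
    simp
  have hcp : cp (-(n:ℂ)) f (e n 0 0 + ((n : ℂ) / (f - (n : ℂ))) • e (n - 1) 1 1) = 0 := by
    rw [map_add, map_smul, cp, mkOp_e, mkOp_e]
    simp [hcast, smul_smul]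
    rw [← add_smul,
        show (2 * (n:ℂ) + ↑n / (f - ↑n) * (2 * (-↑n + 2 * (↑n - 1) + 2 - f))) = 0 by
          field_simp; ring,
        zero_smul]
  have hcm : cm (-(n:ℂ)) f (e n 0 0 + ((n : ℂ) / (f - (n : ℂ))) • e (n - 1) 1 1) = 0 := by
    rw [map_add, map_smul, cm, mkOp_e, mkOp_e]
    simp [hcast, smul_smul]
    rw [show ((n:ℂ) / (f - ↑n) * (2 * (-↑n + f))) = 2 * (n:ℂ) by field_simp; ring]
    simp
  refine ⟨hA, hcp, hcm, by omega, ?_, ?_, hA, hcp, hcm⟩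
  · intro hzero
    have h0 := congrArg (fun w : Mmod => w (n, 0, 0)) hzero
    simp [e, Finsupp.single_apply, Prod.ext_iff, (by omega : ¬ n = n - 1)] at h0
  · apply Submodule.add_mem
    · exact Submodule.subset_span ⟨n, 0, 0, by simp, rfl⟩
    · exact Submodule.smul_mem _ _ (Submodule.subset_span ⟨n - 1, 1, 1, by omega, rfl⟩)
end
end

section
/- (Even-level singular vector equations, from the proof of Theorem 3.3) For every positive integer n and all α, β ∈ ℂ, the vector u = β·e(n,0,0) + α·e(n−1,1,1) satisfies A₋u = c₊u = c₋u = 0 if and only if the following four equations hold: nβ + α(h+2n−f) = 0, nβ − α(h+f) = 0, nβ(h+n−1) + α(h+f) = 0, and α(n−1)(h+n) = 0. -/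
/-!
Verma module `M(h,f)` over the ℤ₂×ℤ₂ graded superalgebra of Rittenberg–Wyler,
realized on the space of finitely supported functions `ℕ × Fin 2 × Fin 2 →₀ ℂ`,
with basis vectors `e k μ ν`.
-/

noncomputable section

lemma two_single (a b : ℂ) (p q : Idx) (hpq : p ≠ q) :
    a • (Finsupp.single p (1:ℂ)) + b • Finsupp.single q 1 = 0 ↔ a = 0 ∧ b = 0 := by
  constructor
  · intro hz
    constructor
    · have := DFunLike.congr_fun hz p
      simpa [Finsupp.single_apply, hpq, Ne.symm hpq] using this
    · have := DFunLike.congr_fun hz q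
      simpa [Finsupp.single_apply, hpq, Ne.symm hpq] using this
  · rintro ⟨rfl, rfl⟩; simp

/-- Even-level singular vector equations (from the proof of Theorem 3.3):
`u = β·e(n,0,0) + α·e(n−1,1,1)` is annihilated by `A₋`, `c₊`, `c₋` iff the four
equations hold. -/
theorem even_level_singular_equations (h f : ℂ) (n : ℕ) (hn : 1 ≤ n) (α β : ℂ) :
    (Am h f (β • e n 0 0 + α • e (n - 1) 1 1) = 0 ∧
     cp h f (β • e n 0 0 + α • e (n - 1) 1 1) = 0 ∧
     cm h f (β • e n 0 0 + α • e (n - 1) 1 1) = 0) ↔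
    ((n : ℂ) * β + α * (h + 2 * (n : ℂ) - f) = 0 ∧
     (n : ℂ) * β - α * (h + f) = 0 ∧
     (n : ℂ) * β * (h + (n : ℂ) - 1) + α * (h + f) = 0 ∧
     α * ((n : ℂ) - 1) * (h + (n : ℂ)) = 0) := by
  have hc : ((n - 1 : ℕ) : ℂ) = (n : ℂ) - 1 := by
    push_cast [Nat.cast_sub hn]; ring
  have hne1 : ((n-1, (0:Fin 2), (0:Fin 2)) : Idx) ≠ (n-2, 1, 1) := by simp
  have hA : Am h f (β • e n 0 0 + α • e (n - 1) 1 1) =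
      (4 * ((n:ℂ) * β * (h + (n:ℂ) - 1) + α * (h + f))) • e (n-1) 0 0
      + (4 * (α * ((n:ℂ) - 1) * (h + (n:ℂ)))) • e (n-2) 1 1 := by
    simp only [map_add, map_smul, Am, mkOp_e]
    simp only [show ((1:Fin 2):ℕ) = 1 from rfl, show ((0:Fin 2):ℕ) = 0 from rfl]
    simp only [and_self, Nat.cast_zero, Nat.cast_one, hc, reduceIte, smul_add, smul_smul,
      Fin.one_eq_zero_iff, Fin.zero_eq_one_iff, Nat.reduceEqDiff, if_false, add_zero,
      smul_zero, zero_add]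
    rw [show n - 1 - 1 = n - 2 from rfl]
    module
  have hp : cp h f (β • e n 0 0 + α • e (n - 1) 1 1) =
      (2 * ((n:ℂ) * β + α * (h + 2 * (n:ℂ) - f))) • e (n-1) 0 1 := by
    simp only [map_add, map_smul, cp, mkOp_e]
    simp only [show ((1:Fin 2):ℕ) = 1 from rfl, show ((0:Fin 2):ℕ) = 0 from rfl]
    simp only [reduceIte, hc, Nat.cast_zero, Nat.cast_one, Fin.one_eq_zero_iff,
      Fin.zero_eq_one_iff, Nat.reduceEqDiff, if_false, smul_add, smul_smul, add_zero,
      smul_zero, zero_add]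
    module
  have hm : cm h f (β • e n 0 0 + α • e (n - 1) 1 1) =
      (2 * ((n:ℂ) * β - α * (h + f))) • e (n-1) 1 0 := by
    simp only [map_add, map_smul, cm, mkOp_e]
    simp only [show ((1:Fin 2):ℕ) = 1 from rfl, show ((0:Fin 2):ℕ) = 0 from rfl]
    simp only [reduceIte, hc, Nat.cast_zero, Nat.cast_one, Fin.one_eq_zero_iff,
      Fin.zero_eq_one_iff, Nat.reduceEqDiff, if_false, smul_add, smul_smul, add_zero,
      smul_zero, zero_add]
    module
  rw [hA, hp, hm]
  rw [show (e (n-1) 0 0 : Mmod) = Finsupp.single ((n-1,0,0) : Idx) 1 from rfl,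
      show (e (n-2) 1 1 : Mmod) = Finsupp.single ((n-2,1,1) : Idx) 1 from rfl]
  rw [two_single _ _ _ _ hne1]
  rw [show (e (n-1) 0 1 : Mmod) = Finsupp.single ((n-1,0,1) : Idx) 1 from rfl,
      show (e (n-1) 1 0 : Mmod) = Finsupp.single ((n-1,1,0) : Idx) 1 from rfl]
  rw [smul_eq_zero, smul_eq_zero]
  simp only [Finsupp.single_eq_zero, one_ne_zero, or_false, mul_eq_zero,
    (by norm_num : (4:ℂ) ≠ 0), (by norm_num : (2:ℂ) ≠ 0), false_or]
  tauto
end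
end

section
/- (No singular vectors at odd level ≥ 3, from the proof of Theorem 3.3) For every positive integer n and all α, β ∈ ℂ, if the vector v = α·e(n,1,0) + β·e(n,0,1) satisfies A₋v = c₊v = c₋v = 0, then α = β = 0. Consequently there is no singular vector at any odd level 2n+1 with n ≥ 1. -/
/-!
Verma module `M(h,f)` over the ℤ₂×ℤ₂ graded superalgebra of Rittenberg–Wyler,
realized on the space of finitely supported functions `ℕ × Fin 2 × Fin 2 →₀ ℂ`,
with basis vectors `e k μ ν`.
-/

noncomputable section

lemma key (h f : ℂ) : ∀ n : ℕ, 1 ≤ n → ∀ α β : ℂ,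
      (Am h f (α • e n 1 0 + β • e n 0 1) = 0 ∧
       cp h f (α • e n 1 0 + β • e n 0 1) = 0 ∧
       cm h f (α • e n 1 0 + β • e n 0 1) = 0) → α = 0 ∧ β = 0 := by
  intro n hn α β ⟨_, hcp, hcm⟩
  have hidx : ((n, (0:Fin 2), (0:Fin 2)) : Idx) ≠ (n - 1, 1, 1) := by simp
  constructor
  · have := congrArg (fun w : Mmod => w (n - 1, 1, 1)) hcp
    simp only [map_add, map_smul, cp, mkOp_e] at this
    simp [Finsupp.add_apply, Finsupp.smul_apply, e, Finsupp.single_apply, hidx] at this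
    rcases this with h1 | h1
    · exact h1
    · omega
  · have := congrArg (fun w : Mmod => w (n - 1, 1, 1)) hcm
    simp only [map_add, map_smul, cm, mkOp_e] at this
    simp [Finsupp.add_apply, Finsupp.smul_apply, e, Finsupp.single_apply, hidx] at this
    rcases this with h1 | h1
    · exact h1
    · omega

lemma levelVecs_odd (n : ℕ) : levelVecs (2 * n + 1) = {e n 1 0, e n 0 1} := by
  ext v
  constructor
  · rintro ⟨k, μ, ν, hk, rfl⟩
    fin_cases μ <;> fin_cases ν <;> simp at hk ⊢
    · omega
    · right; have : k = n := by omega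
      rw [this]
    · left; have : k = n := by omega
      rw [this]
    · omega
  · intro hv
    rcases hv with rfl | rfl
    · exact ⟨n, 1, 0, by simp, rfl⟩
    · exact ⟨n, 0, 1, by simp, rfl⟩

/-- No singular vectors at odd level `2n+1 ≥ 3` (from the proof of Theorem 3.3):
if `v = α·e(n,1,0) + β·e(n,0,1)` with `n ≥ 1` is annihilated by `A₋`, `c₊`, `c₋`,
then `α = β = 0`; consequently there is no singular vector at any odd level `2n+1`
with `n ≥ 1`. -/
theorem no_singular_vector_odd_level (h f : ℂ) :
    (∀ n : ℕ, 1 ≤ n → ∀ α β : ℂ,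
      (Am h f (α • e n 1 0 + β • e n 0 1) = 0 ∧
       cp h f (α • e n 1 0 + β • e n 0 1) = 0 ∧
       cm h f (α • e n 1 0 + β • e n 0 1) = 0) → α = 0 ∧ β = 0) ∧
    (∀ n : ℕ, 1 ≤ n → ∀ v : Mmod, ¬ IsSingular h f (2 * n + 1) v) := by
  refine ⟨key h f, ?_⟩
  intro n hn v hv
  obtain ⟨-, hv0, hspan, hA, hcpv, hcmv⟩ := hv
  rw [levelVecs_odd] at hspan
  rw [show ({e n 1 0, e n 0 1} : Set Mmod) = {e n 1 0, e n 0 1} from rfl,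
    Submodule.mem_span_pair] at hspan
  obtain ⟨α, β, rfl⟩ := hspan
  obtain ⟨hα, hβ⟩ := key h f n hn α β ⟨hA, hcpv, hcmv⟩
  exact hv0 (by rw [hα, hβ]; simp)
end
end

section
/- (Level-1 characterization, from the proof of Theorem 3.3) For all α, β ∈ ℂ, the vector v = α·e(0,1,0) + β·e(0,0,1) satisfies A₋v = c₊v = c₋v = 0 if and only if α(h−f) = 0 and β(h+f) = 0. In particular, a singular vector at level 1 exists if and only if h = f or h = −f. -/
/-!
Verma module `M(h,f)` over the ℤ₂×ℤ₂ graded superalgebra of Rittenberg–Wyler,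
realized on the space of finitely supported functions `ℕ × Fin 2 × Fin 2 →₀ ℂ`,
with basis vectors `e k μ ν`.
-/

noncomputable section

lemma Am_e10 (h f : ℂ) : Am h f (e 0 1 0) = 0 := by simp [Am, mkOp_e]
lemma Am_e01 (h f : ℂ) : Am h f (e 0 0 1) = 0 := by simp [Am, mkOp_e]
lemma cp_e10 (h f : ℂ) : cp h f (e 0 1 0) = (2 * (h - f)) • e 0 0 0 := by
  simp [cp, mkOp_e]
lemma cp_e01 (h f : ℂ) : cp h f (e 0 0 1) = 0 := by simp [cp, mkOp_e]
lemma cm_e10 (h f : ℂ) : cm h f (e 0 1 0) = 0 := by simp [cm, mkOp_e]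
lemma cm_e01 (h f : ℂ) : cm h f (e 0 0 1) = (2 * (h + f)) • e 0 0 0 := by
  simp [cm, mkOp_e]

lemma levelVecs_one : levelVecs 1 = {e 0 1 0, e 0 0 1} := by
  ext v
  constructor
  · rintro ⟨k, μ, ν, hk, rfl⟩
    have hk0 : k = 0 := by omega
    subst hk0
    fin_cases μ <;> fin_cases ν <;> simp_all
  · rintro (rfl | rfl)
    · exact ⟨0, 1, 0, by simp, rfl⟩
    · exact ⟨0, 0, 1, by simp, rfl⟩

/-- Level-1 characterization (from the proof of Theorem 3.3):
`v = α·e(0,1,0) + β·e(0,0,1)` is annihilated by `A₋`, `c₊`, `c₋` iff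
`α(h−f) = 0` and `β(h+f) = 0`; in particular a singular vector at level 1 exists
iff `h = f` or `h = −f`. -/
theorem level_one_characterization (h f : ℂ) :
    (∀ α β : ℂ,
      (Am h f (α • e 0 1 0 + β • e 0 0 1) = 0 ∧
       cp h f (α • e 0 1 0 + β • e 0 0 1) = 0 ∧
       cm h f (α • e 0 1 0 + β • e 0 0 1) = 0) ↔
      (α * (h - f) = 0 ∧ β * (h + f) = 0)) ∧
    ((∃ v : Mmod, IsSingular h f 1 v) ↔ (h = f ∨ h = -f)) := by
  have key : ∀ α β : ℂ,
      (Am h f (α • e 0 1 0 + β • e 0 0 1) = 0 ∧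
       cp h f (α • e 0 1 0 + β • e 0 0 1) = 0 ∧
       cm h f (α • e 0 1 0 + β • e 0 0 1) = 0) ↔
      (α * (h - f) = 0 ∧ β * (h + f) = 0) := by
    intro α β
    have E1 : Am h f (α • e 0 1 0 + β • e 0 0 1) = 0 := by
      rw [map_add, map_smul, map_smul, Am_e10, Am_e01, smul_zero, smul_zero, add_zero]
    have E2 : cp h f (α • e 0 1 0 + β • e 0 0 1) = (α * (2 * (h - f))) • e 0 0 0 := by
      rw [map_add, map_smul, map_smul, cp_e10, cp_e01, smul_zero, add_zero, smul_smul]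
    have E3 : cm h f (α • e 0 1 0 + β • e 0 0 1) = (β * (2 * (h + f))) • e 0 0 0 := by
      rw [map_add, map_smul, map_smul, cm_e10, cm_e01, smul_zero, zero_add, smul_smul]
    constructor
    · rintro ⟨-, h1, h2⟩
      rw [E2] at h1
      rw [E3] at h2
      have c1 : α * (2 * (h - f)) = 0 := by
        have := congrArg (fun g => g (0, 0, 0)) h1
        simpa [e, Finsupp.smul_single] using this
      have c2 : β * (2 * (h + f)) = 0 := by
        have := congrArg (fun g => g (0, 0, 0)) h2
        simpa [e, Finsupp.smul_single] using this
      exact ⟨by linear_combination c1 / 2, by linear_combination c2 / 2⟩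
    · rintro ⟨h1, h2⟩
      refine ⟨E1, ?_, ?_⟩
      · rw [E2]
        have : α * (2 * (h - f)) = 0 := by linear_combination 2 * h1
        rw [this, zero_smul]
      · rw [E3]
        have : β * (2 * (h + f)) = 0 := by linear_combination 2 * h2
        rw [this, zero_smul]
  refine ⟨key, ?_⟩
  constructor
  · rintro ⟨v, -, hv0, hspan, hA, hcp, hcm⟩
    rw [levelVecs_one, Submodule.mem_span_pair] at hspan
    obtain ⟨α, β, rfl⟩ := hspan
    obtain ⟨h1, h2⟩ := (key α β).1 ⟨hA, hcp, hcm⟩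
    have hαβ : α ≠ 0 ∨ β ≠ 0 := by
      by_contra hc
      push_neg at hc
      exact hv0 (by simp [hc.1, hc.2])
    rcases hαβ with hα | hβ
    · left
      have := (mul_eq_zero.1 h1).resolve_left hα
      linear_combination this
    · right
      have := (mul_eq_zero.1 h2).resolve_left hβ
      linear_combination this
  · rintro (rfl | rfl)
    · refine ⟨e 0 1 0, le_refl 1, e_ne_zero 0 1 0, ?_, ?_⟩
      · exact Submodule.subset_span ⟨0, 1, 0, by simp, rfl⟩
      · have := (key 1 0).2 (by simp)
        simpa using this
    · refine ⟨e 0 0 1, le_refl 1, e_ne_zero 0 0 1, ?_, ?_⟩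
      · exact Submodule.subset_span ⟨0, 0, 1, by simp, rfl⟩
      · have := (key 0 1).2 (by simp)
        simpa using this
end
end

section
/- (Theorem 3.3(3), uniqueness) Let n be a positive integer with f ≠ n. If v = β·e(n,0,0) + α·e(n−1,1,1) (α, β ∈ ℂ) is a nonzero vector satisfying A₋v = c₊v = c₋v = 0, then h = −n, β ≠ 0, and α = nβ/(f−n); that is, v is a nonzero scalar multiple of e(n,0,0) + (n/(f−n))·e(n−1,1,1). -/
/-!
Verma module `M(h,f)` over the ℤ₂×ℤ₂ graded superalgebra of Rittenberg–Wyler,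
realized on the space of finitely supported functions `ℕ × Fin 2 × Fin 2 →₀ ℂ`,
with basis vectors `e k μ ν`.
-/

noncomputable section

lemma e_apply (k : ℕ) (μ ν : Fin 2) (p : Idx) : e k μ ν p = if (k,μ,ν) = p then 1 else 0 := by
  simp [e, Finsupp.single_apply]

/-- Theorem 3.3(3), uniqueness: let `n ≥ 1` with `f ≠ n`. If
`v = β·e(n,0,0) + α·e(n−1,1,1)` is nonzero and annihilated by `A₋`, `c₊`, `c₋`,
then `h = −n`, `β ≠ 0`, `α = nβ/(f−n)`, i.e. `v` is a nonzero scalar multiple of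
`e(n,0,0) + (n/(f−n))·e(n−1,1,1)`. -/
theorem even_level_singular_uniqueness (h f : ℂ) (n : ℕ) (hn : 1 ≤ n)
    (hf : f ≠ (n : ℂ)) (α β : ℂ) (v : Mmod)
    (hv : v = β • e n 0 0 + α • e (n - 1) 1 1) (hv0 : v ≠ 0)
    (h1 : Am h f v = 0) (h2 : cp h f v = 0) (h3 : cm h f v = 0) :
    h = -(n : ℂ) ∧ β ≠ 0 ∧ α = (n : ℂ) * β / (f - (n : ℂ)) ∧
    ∃ c : ℂ, c ≠ 0 ∧ v = c • (e n 0 0 + ((n : ℂ) / (f - (n : ℂ))) • e (n - 1) 1 1) := by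
  subst hv
  have hn0 : (n : ℂ) ≠ 0 := Nat.cast_ne_zero.mpr (by omega)
  have hfn : f - (n : ℂ) ≠ 0 := sub_ne_zero.mpr hf
  have hc : ((n - 1 : ℕ) : ℂ) = (n : ℂ) - 1 := by
    push_cast [Nat.cast_sub hn]; ring
  have E1 := DFunLike.congr_fun h1 (n - 1, 0, 0)
  have E2 := DFunLike.congr_fun h2 (n - 1, 0, 1)
  have E3 := DFunLike.congr_fun h3 (n - 1, 1, 0)
  simp [Am, cp, cm, mkOp_e, e_apply, Prod.ext_iff, hc] at E1 E2 E3
  have hβ : β ≠ 0 := by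
    intro hb
    subst hb
    have hα : α ≠ 0 := by
      intro ha; subst ha; simp at hv0
    have k1 : α * (h + f) = 0 := by linear_combination -E3 / 2
    have k2 : α * (h + 2 * (n : ℂ) - f) = 0 := by linear_combination E2 / 2
    have k1' : h + f = 0 := (mul_eq_zero.mp k1).resolve_left hα
    have k2' : h + 2 * (n : ℂ) - f = 0 := (mul_eq_zero.mp k2).resolve_left hα
    exact hf (by linear_combination (k2' - k1') / (-2))
  have hα0 : α ≠ 0 := by
    intro ha
    subst ha
    have : β * (n : ℂ) = 0 := by linear_combination E3 / 2
    exact hβ ((mul_eq_zero.mp this).resolve_right hn0)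
  have h3' : α * (h + f) = (n : ℂ) * β := by linear_combination -E3 / 2
  have hmul : (n : ℂ) * β * (h + (n : ℂ)) = 0 := by linear_combination E1 / 4 - h3'
  have hh : h = -(n : ℂ) := by
    have := (mul_eq_zero.mp hmul).resolve_left (mul_ne_zero hn0 hβ)
    linear_combination this
  have hα : α = (n : ℂ) * β / (f - (n : ℂ)) := by
    rw [eq_div_iff hfn]
    linear_combination -E2 / 2 + α * hh
  refine ⟨hh, hβ, hα, β, hβ, ?_⟩
  have hα' : α = β * ((n : ℂ) / (f - (n : ℂ))) := by rw [hα]; ring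
  rw [smul_add, smul_smul, ← hα']
end
end

section
/- (Level constraint on singular vectors) If v ∈ M is a singular vector at level m ≥ 1, then either m = 1 and (h = f or h = −f), or m = 2n for some positive integer n and h = −n. -/
/-!
Verma module `M(h,f)` over the ℤ₂×ℤ₂ graded superalgebra of Rittenberg–Wyler,
realized on the space of finitely supported functions `ℕ × Fin 2 × Fin 2 →₀ ℂ`,
with basis vectors `e k μ ν`.
-/

noncomputable section

lemma cp_e (h f : ℂ) (k : ℕ) (μ ν : Fin 2) :
    cp h f (e k μ ν) =
      (if μ = 1 then (2 * (h + 2 * (k : ℂ) + 2 * ((ν : ℕ) : ℂ) - f)) • e k 0 ν else 0)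
      + (if ν = 0 then ((-1 : ℂ) ^ (μ : ℕ) * (2 * (k : ℂ))) • e (k - 1) μ 1 else 0) := by
  rw [cp, mkOp_e]

lemma cm_e (h f : ℂ) (k : ℕ) (μ ν : Fin 2) :
    cm h f (e k μ ν) =
      (if ν = 1 then ((-1 : ℂ) ^ (μ : ℕ) * (2 * (h + f))) • e k μ 0 else 0)
      + (if μ = 0 then (2 * (k : ℂ)) • e (k - 1) 1 ν else 0) := by
  rw [cm, mkOp_e]

lemma lv_odd (n : ℕ) : levelVecs (2*n+1) = {e n 1 0, e n 0 1} := by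
  ext w
  simp only [Set.mem_insert_iff, Set.mem_singleton_iff]
  constructor
  · rintro ⟨k, μ, ν, hlev, rfl⟩
    fin_cases μ <;> fin_cases ν <;> simp at hlev ⊢ <;>
      first
        | (exact absurd hlev (by omega))
        | (obtain rfl : k = n := by omega
           simp)
  · rintro (rfl | rfl)
    · exact ⟨n, 1, 0, by simp, rfl⟩
    · exact ⟨n, 0, 1, by simp, rfl⟩

lemma lv_even (n : ℕ) : levelVecs (2*(n+1)) = {e (n+1) 0 0, e n 1 1} := by
  ext w
  simp only [Set.mem_insert_iff, Set.mem_singleton_iff]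
  constructor
  · rintro ⟨k, μ, ν, hlev, rfl⟩
    fin_cases μ <;> fin_cases ν <;> simp at hlev ⊢ <;>
      first
        | (exact absurd hlev (by omega))
        | (obtain rfl : k = n + 1 := by omega
           simp)
        | (obtain rfl : k = n := by omega
           simp)
  · rintro (rfl | rfl)
    · exact ⟨n+1, 0, 0, by simp, rfl⟩
    · exact ⟨n, 1, 1, by simp; ring, rfl⟩

/-- Level constraint on singular vectors: if `v` is a singular vector at level
`m ≥ 1`, then either `m = 1` and (`h = f` or `h = −f`), or `m = 2n` for some
positive integer `n` and `h = −n`. -/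
theorem singular_vector_level_constraint (h f : ℂ) (m : ℕ) (v : Mmod)
    (hsing : IsSingular h f m v) :
    (m = 1 ∧ (h = f ∨ h = -f)) ∨
    (∃ n : ℕ, 1 ≤ n ∧ m = 2 * n ∧ h = -(n : ℂ)) := by
  obtain ⟨hm, hv0, hspan, hA, hcp, hcm⟩ := hsing
  rcases Nat.even_or_odd m with hev | hodd
  · -- even case
    obtain ⟨r, rfl⟩ := hev
    obtain ⟨n, rfl⟩ : ∃ n, r = n + 1 := ⟨r - 1, by omega⟩
    have hset : levelVecs (n + 1 + (n + 1)) = {e (n+1) 0 0, e n 1 1} := by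
      have h2 := lv_even n
      rwa [show 2*(n+1) = n + 1 + (n + 1) by ring] at h2
    rw [hset, Submodule.mem_span_pair] at hspan
    obtain ⟨a, b, hv⟩ := hspan
    rw [← hv] at hcp hcm hv0
    simp only [map_add, map_smul, cp_e, cm_e] at hcp hcm
    simp only [Fin.isValue, if_true, if_false, reduceIte, Fin.val_zero, Fin.val_one,
      Nat.cast_zero, Nat.cast_one, pow_zero, pow_one, one_mul, Nat.add_sub_cancel,
      Nat.cast_add, smul_zero, add_zero, zero_add, mul_zero] at hcp hcm
    have E1 := DFunLike.congr_fun hcp (n, 0, 1)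
    have E2 := DFunLike.congr_fun hcm (n, 1, 0)
    simp [e, Finsupp.single_apply, smul_smul] at E1 E2
    have hb : b * (h + ((n : ℂ) + 1)) = 0 := by linear_combination (E1 - E2) / 4
    rcases mul_eq_zero.mp hb with rfl | h1
    · exfalso
      have hne : (2 : ℂ) * ((n : ℂ) + 1) ≠ 0 :=
        mul_ne_zero two_ne_zero (Nat.cast_add_one_ne_zero n)
      have ha : a = 0 := by
        rcases mul_eq_zero.mp (show a * (2 * ((n : ℂ) + 1)) = 0 by linear_combination E1)
          with h' | h'
        · exact h'
        · exact absurd h' hne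
      apply hv0
      rw [ha]; simp
    · right
      refine ⟨n + 1, by omega, by omega, ?_⟩
      push_cast
      linear_combination h1
  · -- odd case
    obtain ⟨n, rfl⟩ := hodd
    rw [lv_odd n, Submodule.mem_span_pair] at hspan
    obtain ⟨a, b, hv⟩ := hspan
    rw [← hv] at hcp hcm hv0
    simp only [map_add, map_smul, cp_e, cm_e] at hcp hcm
    simp only [Fin.isValue, if_true, if_false, reduceIte, Fin.val_zero, Fin.val_one,
      Nat.cast_zero, Nat.cast_one, pow_zero, pow_one, one_mul, neg_mul,
      smul_zero, add_zero, zero_add, mul_zero] at hcp hcm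
    rcases n with _ | n'
    · left
      refine ⟨rfl, ?_⟩
      have E1 := DFunLike.congr_fun hcp (0, 0, 0)
      have E2 := DFunLike.congr_fun hcm (0, 0, 0)
      simp [e, Finsupp.single_apply, smul_smul] at E1 E2
      rcases E1 with ha | hf1
      · rcases E2 with hb | hf2
        · exact absurd (by rw [ha, hb]; simp) hv0
        · exact Or.inr (by linear_combination hf2)
      · exact Or.inl (by linear_combination hf1)
    · exfalso
      have E1 := DFunLike.congr_fun hcp (n', 1, 1)
      have E2 := DFunLike.congr_fun hcm (n', 1, 1)
      simp [e, Finsupp.single_apply, smul_smul] at E1 E2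
      have hne : ((n' : ℂ) + 1) ≠ 0 := Nat.cast_add_one_ne_zero n'
      obtain rfl : a = 0 := E1.resolve_right hne
      obtain rfl : b = 0 := E2.resolve_right hne
      exact hv0 (by simp)
end
end

section
/- (Corollary 3.4: irreducibility of the Verma module) Suppose h ≠ f, h ≠ −f, and for every positive integer n either h ≠ −n or f = n. Then the only subspaces of M that are invariant under all eight operators N, F̃, A₊, A₋, c₊, c₋, d₊, d₋ are the zero subspace and M itself. -/
/-!
Verma module `M(h,f)` over the ℤ₂×ℤ₂ graded superalgebra of Rittenberg–Wyler,
realized on the space of finitely supported functions `ℕ × Fin 2 × Fin 2 →₀ ℂ`,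
with basis vectors `e k μ ν`.
-/

noncomputable section

namespace VermaAux

lemma e_apply (x j : Idx) : e x.1 x.2.1 x.2.2 j = if x = j then 1 else 0 := by
  rw [show e x.1 x.2.1 x.2.2 = Finsupp.single x 1 from by rw [e]]
  exact Finsupp.single_apply

lemma single_repr (w : Mmod) (x : Idx) (hs : ∀ j, w j ≠ 0 → j = x) :
    w = w x • e x.1 x.2.1 x.2.2 := by
  classical
  ext j
  rw [Finsupp.smul_apply, e_apply, smul_eq_mul]
  by_cases hj : j = x
  · subst hj; rw [if_pos rfl, mul_one]
  · have hwj : w j = 0 := by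
      by_contra hc; exact hj (hs j hc)
    rw [hwj, if_neg (fun h => hj h.symm), mul_zero]

lemma combo_apply (a b : ℂ) (x y j : Idx) :
    (a • e x.1 x.2.1 x.2.2 + b • e y.1 y.2.1 y.2.2) j
      = (if x = j then a else 0) + (if y = j then b else 0) := by
  classical
  rw [Finsupp.add_apply, Finsupp.smul_apply, Finsupp.smul_apply, e_apply, e_apply,
    smul_eq_mul, smul_eq_mul, mul_ite, mul_ite, mul_one, mul_zero, mul_one, mul_zero]

lemma pair_repr (w : Mmod) (x y : Idx) (hxy : x ≠ y)
    (hs : ∀ j, w j ≠ 0 → j = x ∨ j = y) :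
    w = w x • e x.1 x.2.1 x.2.2 + w y • e y.1 y.2.1 y.2.2 := by
  classical
  ext j
  rw [combo_apply]
  by_cases hjx : j = x
  · subst hjx
    rw [if_pos rfl, if_neg (fun h : y = j => hxy h.symm), add_zero]
  · by_cases hjy : j = y
    · subst hjy
      rw [if_pos rfl, if_neg (fun h : x = j => hjx h.symm), zero_add]
    · have hwj : w j = 0 := by
        by_contra hc
        rcases hs j hc with h | h
        · exact hjx h
        · exact hjy h
      rw [hwj, if_neg (fun h : x = j => hjx h.symm), if_neg (fun h : y = j => hjy h.symm),
        add_zero]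

lemma combo_support (a b : ℂ) (x y j : Idx)
    (hj : (a • e x.1 x.2.1 x.2.2 + b • e y.1 y.2.1 y.2.2) j ≠ 0) :
    (j = x ∧ a ≠ 0) ∨ (j = y ∧ b ≠ 0) := by
  classical
  rw [combo_apply] at hj
  by_cases hx : x = j <;> by_cases hy : y = j
  · rw [if_pos hx, if_pos hy] at hj
    by_cases ha : a = 0
    · right; exact ⟨hy.symm, fun hb => hj (by rw [ha, hb, add_zero])⟩
    · left; exact ⟨hx.symm, ha⟩
  · rw [if_pos hx, if_neg hy, add_zero] at hj
    exact Or.inl ⟨hx.symm, hj⟩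
  · rw [if_neg hx, if_pos hy, zero_add] at hj
    exact Or.inr ⟨hy.symm, hj⟩
  · rw [if_neg hx, if_neg hy, add_zero] at hj
    exact absurd rfl hj

lemma proj_mem (c : Idx → ℂ) (T : Mmod →ₗ[ℂ] Mmod)
    (hTv : ∀ (v : Mmod) (j : Idx), T v j = c j * v j)
    (p : Submodule ℂ Mmod) (hT : ∀ v ∈ p, T v ∈ p) (v : Mmod) (hv : v ∈ p) (lam : ℂ) :
    v.filter (fun j => c j = lam) ∈ p := by
  classical
  suffices H : ∀ (n : ℕ) (v : Mmod), v ∈ p → (v.support.image c).card ≤ n →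
      v.filter (fun j => c j = lam) ∈ p from H _ v hv le_rfl
  intro n
  induction n with
  | zero =>
    intro v hv hcard
    have hemp : v.support = ∅ := by
      by_contra hne
      obtain ⟨j, hj⟩ := Finset.nonempty_iff_ne_empty.mpr hne
      have : c j ∈ v.support.image c := Finset.mem_image_of_mem c hj
      have : 0 < (v.support.image c).card := Finset.card_pos.mpr ⟨c j, this⟩
      omega
    have hv0 : v = 0 := Finsupp.support_eq_empty.mp hemp
    rw [hv0, Finsupp.filter_zero]
    exact p.zero_mem
  | succ n ih =>
    intro v hv hcard
    by_cases hex : ∃ lam0 ∈ v.support.image c, lam0 ≠ lam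
    · obtain ⟨lam0, hmem, hne⟩ := hex
      have hw : ∀ j, (T v - lam0 • v) j = (c j - lam0) * v j := by
        intro j
        rw [Finsupp.sub_apply, Finsupp.smul_apply, hTv, smul_eq_mul]
        ring
      have hwp : T v - lam0 • v ∈ p := p.sub_mem (hT v hv) (p.smul_mem _ hv)
      have hsub : (T v - lam0 • v).support.image c ⊆ (v.support.image c).erase lam0 := by
        intro x hx
        obtain ⟨j, hj, rfl⟩ := Finset.mem_image.mp hx
        have hwj := Finsupp.mem_support_iff.mp hj
        rw [hw] at hwj
        have hvj : v j ≠ 0 := fun h0 => hwj (by rw [h0, mul_zero])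
        have hcj : c j ≠ lam0 := fun h0 => hwj (by rw [h0, sub_self, zero_mul])
        exact Finset.mem_erase.mpr ⟨hcj, Finset.mem_image_of_mem c (Finsupp.mem_support_iff.mpr hvj)⟩
      have hcard' : ((T v - lam0 • v).support.image c).card ≤ n := by
        have h1 := Finset.card_le_card hsub
        rw [Finset.card_erase_of_mem hmem] at h1
        have h2 : 0 < (v.support.image c).card := Finset.card_pos.mpr ⟨lam0, hmem⟩
        omega
      have hwf := ih _ hwp hcard'
      have hne' : lam - lam0 ≠ 0 := sub_ne_zero.mpr (Ne.symm hne)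
      have hrel : (T v - lam0 • v).filter (fun j => c j = lam)
          = (lam - lam0) • v.filter (fun j => c j = lam) := by
        ext j
        rw [Finsupp.smul_apply, Finsupp.filter_apply, Finsupp.filter_apply, smul_eq_mul]
        by_cases hcj : c j = lam
        · rw [if_pos hcj, if_pos hcj, hw, hcj]
        · rw [if_neg hcj, if_neg hcj, mul_zero]
      have heq : v.filter (fun j => c j = lam)
          = (lam - lam0)⁻¹ • ((T v - lam0 • v).filter (fun j => c j = lam)) := by
        rw [hrel, smul_smul, inv_mul_cancel₀ hne', one_smul]
      rw [heq]
      exact p.smul_mem _ hwf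
    · push_neg at hex
      have : v.filter (fun j => c j = lam) = v := by
        ext j
        rw [Finsupp.filter_apply]
        by_cases hcj : c j = lam
        · rw [if_pos hcj]
        · rw [if_neg hcj]
          by_cases hj : v j = 0
          · exact hj.symm
          · exact absurd (hex (c j) (Finset.mem_image_of_mem c (Finsupp.mem_support_iff.mpr hj))) hcj
      rw [this]
      exact hv

end VermaAux
/-! ### Auxiliary infrastructure for the irreducibility proof -/

namespace VermaAux

open Classical

lemma lift_apply' (φ : Idx → Mmod) (v : Mmod) : mkOp φ v = v.sum fun i a => a • φ i := by
  simp [mkOp, Finsupp.lift_apply]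

lemma mkOp_e (φ : Idx → Mmod) (k : ℕ) (μ ν : Fin 2) : mkOp φ (e k μ ν) = φ (k, μ, ν) := by
  rw [lift_apply', e]
  rw [Finsupp.sum_single_index]
  · exact one_smul _ _
  · exact zero_smul _ _

lemma diag_apply (c : Idx → ℂ) (v : Mmod) (j : Idx) :
    mkOp (fun i => c i • e i.1 i.2.1 i.2.2) v j = c j * v j := by
  classical
  rw [lift_apply', Finsupp.sum_apply, Finsupp.sum, Finset.sum_eq_single j]
  · simp [e, Finsupp.single_apply]; ring
  · intro i _ hij
    simp [e, Finsupp.single_apply, hij]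
  · intro hj
    simp [Finsupp.notMem_support_iff.mp hj]

/-- eigenvalue function of `N` -/
def c1 (h : ℂ) (i : Idx) : ℂ := h + 2 * (i.1 : ℂ) + ((i.2.1 : ℕ) : ℂ) + ((i.2.2 : ℕ) : ℂ)

/-- eigenvalue function of `F̃` -/
def c2 (f : ℂ) (i : Idx) : ℂ := f + ((i.2.1 : ℕ) : ℂ) - ((i.2.2 : ℕ) : ℂ)

lemma Nop_apply (h : ℂ) (v : Mmod) (j : Idx) : Nop h v j = c1 h j * v j :=
  diag_apply (c1 h) v j

lemma Fop_apply (f : ℂ) (v : Mmod) (j : Idx) : Fop f v j = c2 f j * v j :=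
  diag_apply (c2 f) v j

end VermaAux
namespace VermaAux

lemma cm_e01 (h f : ℂ) (k : ℕ) :
    cm h f (e k 0 1) = (2*(h+f)) • e k 0 0 + (2*(k:ℂ)) • e (k-1) 1 1 := by
  rw [cm, mkOp_e]; norm_num

lemma cm_e00 (h f : ℂ) (k : ℕ) :
    cm h f (e k 0 0) = (2*(k:ℂ)) • e (k-1) 1 0 := by
  rw [cm, mkOp_e]; norm_num

lemma cm_e11 (h f : ℂ) (k : ℕ) :
    cm h f (e k 1 1) = (-(2*(h+f))) • e k 1 0 := by
  rw [cm, mkOp_e]; norm_num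

lemma cp_e10 (h f : ℂ) (k : ℕ) :
    cp h f (e k 1 0) = (2*(h+2*(k:ℂ)-f)) • e k 0 0 + (-(2*(k:ℂ))) • e (k-1) 1 1 := by
  rw [cp, mkOp_e]; norm_num

lemma cp_e00 (h f : ℂ) (k : ℕ) :
    cp h f (e k 0 0) = (2*(k:ℂ)) • e (k-1) 0 1 := by
  rw [cp, mkOp_e]; norm_num

lemma cp_e11 (h f : ℂ) (k : ℕ) :
    cp h f (e k 1 1) = (2*(h+2*(k:ℂ)+2-f)) • e k 0 1 := by
  rw [cp, mkOp_e]; norm_num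

lemma Ap_e (k : ℕ) (μ ν : Fin 2) : Ap (e k μ ν) = e (k+1) μ ν := by
  rw [Ap, mkOp_e]

lemma dp_e0 (k : ℕ) (ν : Fin 2) : dp (e k 0 ν) = e k 1 ν := by
  rw [dp, mkOp_e]; norm_num

lemma dm_e00 (k : ℕ) : dm (e k 0 0) = e k 0 1 := by
  rw [dm, mkOp_e]; norm_num

end VermaAux
namespace VermaAux

lemma extract_component (h f : ℂ) (p : Submodule ℂ Mmod)
    (hN : ∀ v ∈ p, Nop h v ∈ p) (hF : ∀ v ∈ p, Fop f v ∈ p)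
    (v : Mmod) (hv : v ∈ p) (i : Idx) :
    ∃ w : Mmod, w ∈ p ∧ w i = v i ∧
      ∀ j, w j ≠ 0 → v j ≠ 0 ∧
        2*j.1 + (j.2.1:ℕ) + (j.2.2:ℕ) = 2*i.1 + (i.2.1:ℕ) + (i.2.2:ℕ) ∧
        ((j.2.1:ℕ):ℤ) - ((j.2.2:ℕ):ℤ) = ((i.2.1:ℕ):ℤ) - ((i.2.2:ℕ):ℤ) := by
  classical
  set w1 := v.filter (fun j => c1 h j = c1 h i) with hw1
  have hw1p : w1 ∈ p := proj_mem (c1 h) (Nop h) (Nop_apply h) p hN v hv _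
  set w := w1.filter (fun j => c2 f j = c2 f i) with hwdef
  have hwp : w ∈ p := proj_mem (c2 f) (Fop f) (Fop_apply f) p hF w1 hw1p _
  refine ⟨w, hwp, ?_, ?_⟩
  · rw [hwdef, Finsupp.filter_apply, if_pos rfl, hw1, Finsupp.filter_apply, if_pos rfl]
  · intro j hj
    rw [hwdef, Finsupp.filter_apply] at hj
    by_cases hc2 : c2 f j = c2 f i
    · rw [if_pos hc2, hw1, Finsupp.filter_apply] at hj
      by_cases hc1 : c1 h j = c1 h i
      · rw [if_pos hc1] at hj
        refine ⟨hj, ?_, ?_⟩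
        · have : ((2*j.1 + (j.2.1:ℕ) + (j.2.2:ℕ) : ℕ) : ℂ)
              = ((2*i.1 + (i.2.1:ℕ) + (i.2.2:ℕ) : ℕ) : ℂ) := by
            push_cast
            rw [c1, c1] at hc1
            linear_combination hc1
          exact_mod_cast this
        · have : ((((j.2.1:ℕ):ℤ) - ((j.2.2:ℕ):ℤ) : ℤ) : ℂ)
              = ((((i.2.1:ℕ):ℤ) - ((i.2.2:ℕ):ℤ) : ℤ) : ℂ) := by
            push_cast
            rw [c2, c2] at hc2
            linear_combination hc2
          exact_mod_cast this
      · exact absurd rfl (by rw [if_neg hc1] at hj; exact hj)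
    · exact absurd rfl (by rw [if_neg hc2] at hj; exact hj)

end VermaAux
namespace VermaAux

lemma fin2_cases (μ : Fin 2) : μ = 0 ∨ μ = 1 := by
  rcases eq_or_ne (μ:ℕ) 0 with hm | hm
  · exact Or.inl (Fin.ext hm)
  · have h2 := μ.isLt
    exact Or.inr (Fin.ext (by omega))

lemma idx_eq (jk k : ℕ) (jm jn m n : Fin 2)
    (hk : jk = k) (hm : (jm:ℕ) = (m:ℕ)) (hn : (jn:ℕ) = (n:ℕ)) :
    ((jk,jm,jn):Idx) = (k,m,n) := by
  subst hk
  rw [show jm = m from Fin.ext hm, show jn = n from Fin.ext hn]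

lemma single_repr' (w : Mmod) (k : ℕ) (m n : Fin 2) (hs : ∀ j, w j ≠ 0 → j = ((k,m,n):Idx)) :
    w = w (k,m,n) • e k m n := single_repr w (k,m,n) hs

lemma pair_repr' (w : Mmod) (k1 : ℕ) (m1 n1 : Fin 2) (k2 : ℕ) (m2 n2 : Fin 2)
    (hxy : ((k1,m1,n1):Idx) ≠ (k2,m2,n2))
    (hs : ∀ j, w j ≠ 0 → j = ((k1,m1,n1):Idx) ∨ j = ((k2,m2,n2):Idx)) :
    w = w (k1,m1,n1) • e k1 m1 n1 + w (k2,m2,n2) • e k2 m2 n2 :=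
  pair_repr w (k1,m1,n1) (k2,m2,n2) hxy hs

lemma combo_apply' (a b : ℂ) (k1 : ℕ) (m1 n1 : Fin 2) (k2 : ℕ) (m2 n2 : Fin 2) (j : Idx) :
    (a • e k1 m1 n1 + b • e k2 m2 n2) j
      = (if ((k1,m1,n1):Idx) = j then a else 0) + (if ((k2,m2,n2):Idx) = j then b else 0) :=
  combo_apply a b (k1,m1,n1) (k2,m2,n2) j

lemma combo_support' (a b : ℂ) (k1 : ℕ) (m1 n1 : Fin 2) (k2 : ℕ) (m2 n2 : Fin 2) (j : Idx)
    (hj : (a • e k1 m1 n1 + b • e k2 m2 n2) j ≠ 0) :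
    (j = ((k1,m1,n1):Idx) ∧ a ≠ 0) ∨ (j = ((k2,m2,n2):Idx) ∧ b ≠ 0) :=
  combo_support a b (k1,m1,n1) (k2,m2,n2) j hj

lemma e_ne_zero (k : ℕ) (m n : Fin 2) : e k m n ≠ 0 := by
  rw [e]
  exact fun h0 => one_ne_zero (Finsupp.single_eq_zero.mp h0)

lemma smul_e_support (C : ℂ) (k : ℕ) (m n : Fin 2) (j : Idx) (hj : (C • e k m n) j ≠ 0) :
    j = ((k,m,n):Idx) := by
  rw [Finsupp.smul_apply, show e k m n j = if ((k,m,n):Idx) = j then 1 else 0 from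
    e_apply (k,m,n) j, smul_eq_mul] at hj
  by_cases hx : ((k,m,n):Idx) = j
  · exact hx.symm
  · rw [if_neg hx, mul_zero] at hj
    exact absurd rfl hj

end VermaAux
namespace VermaAux

/-- Odd case `i = (k,0,1)`: apply `c₋`. -/
lemma odd01_case (h f : ℂ) (hhf : h + f ≠ 0) (p : Submodule ℂ Mmod)
    (hcmI : ∀ v ∈ p, cm h f v ∈ p) (k : ℕ) (w : Mmod) (hwp : w ∈ p)
    (ha : w (k,0,1) ≠ 0) (hcl : ∀ j, w j ≠ 0 → j = ((k,0,1):Idx)) :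
    ∃ u ∈ p, u ≠ 0 ∧ ∀ j : Idx, u j ≠ 0 → 2*j.1 + (j.2.1:ℕ) + (j.2.2:ℕ) ≤ 2*k := by
  set a := w (k,0,1) with hadef
  have hrepr : w = a • e k 0 1 := single_repr' w k 0 1 hcl
  have hu : cm h f w = (a*(2*(h+f))) • e k 0 0 + (a*(2*(k:ℂ))) • e (k-1) 1 1 := by
    rw [hrepr, map_smul, cm_e01, smul_add, smul_smul, smul_smul]
  refine ⟨cm h f w, hcmI w hwp, ?_, ?_⟩
  · intro h0
    have hco : cm h f w (k,0,0) = a*(2*(h+f)) := by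
      rw [hu, combo_apply', if_pos rfl, if_neg (by simp), add_zero]
    rw [h0] at hco
    exact mul_ne_zero ha (mul_ne_zero two_ne_zero hhf) hco.symm
  · intro j hj
    rw [hu] at hj
    rcases combo_support' _ _ _ _ _ _ _ _ _ hj with ⟨rfl, -⟩ | ⟨rfl, hb⟩
    · simp <;> omega
    · have hk : k ≠ 0 := by
        intro hk0
        exact hb (by rw [hk0]; norm_num)
      simp <;> omega

/-- Odd case `i = (k,1,0)`: apply `c₊`. -/
lemma odd10_case (h f : ℂ) (h1 : h ≠ f) (p : Submodule ℂ Mmod)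
    (hcpI : ∀ v ∈ p, cp h f v ∈ p) (k : ℕ) (w : Mmod) (hwp : w ∈ p)
    (ha : w (k,1,0) ≠ 0) (hcl : ∀ j, w j ≠ 0 → j = ((k,1,0):Idx)) :
    ∃ u ∈ p, u ≠ 0 ∧ ∀ j : Idx, u j ≠ 0 → 2*j.1 + (j.2.1:ℕ) + (j.2.2:ℕ) ≤ 2*k := by
  set a := w (k,1,0) with hadef
  have hrepr : w = a • e k 1 0 := single_repr' w k 1 0 hcl
  have hu : cp h f w = (a*(2*(h+2*(k:ℂ)-f))) • e k 0 0 + (a*(-(2*(k:ℂ)))) • e (k-1) 1 1 := by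
    rw [hrepr, map_smul, cp_e10, smul_add, smul_smul, smul_smul]
  refine ⟨cp h f w, hcpI w hwp, ?_, ?_⟩
  · intro h0
    have hco1 : cp h f w (k,0,0) = a*(2*(h+2*(k:ℂ)-f)) := by
      rw [hu, combo_apply', if_pos rfl, if_neg (by simp), add_zero]
    have hco2 : cp h f w (k-1,1,1) = a*(-(2*(k:ℂ))) := by
      rw [hu, combo_apply', if_pos rfl, if_neg (by simp), zero_add]
    rw [h0] at hco1 hco2
    have e1 : h + 2*(k:ℂ) - f = 0 := by
      rcases mul_eq_zero.mp hco1.symm with hc | hc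
      · exact absurd hc ha
      · rcases mul_eq_zero.mp hc with hc' | hc'
        · exact absurd hc' two_ne_zero
        · exact hc'
    have e2 : (k:ℂ) = 0 := by
      rcases mul_eq_zero.mp hco2.symm with hc | hc
      · exact absurd hc ha
      · have : (2:ℂ)*(k:ℂ) = 0 := by linear_combination -hc
        rcases mul_eq_zero.mp this with hc' | hc'
        · exact absurd hc' two_ne_zero
        · exact hc'
    exact h1 (by linear_combination e1 - 2*e2)
  · intro j hj
    rw [hu] at hj
    rcases combo_support' _ _ _ _ _ _ _ _ _ hj with ⟨rfl, -⟩ | ⟨rfl, hb⟩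
    · simp <;> omega
    · have hk : k ≠ 0 := by
        intro hk0
        exact hb (by rw [hk0]; norm_num)
      simp <;> omega

/-- Even case: `w` supported on `{(K,0,0),(K−1,1,1)}`, `K ≥ 1`. -/
lemma even_case (h f : ℂ) (h2 : h ≠ -f) (h3 : ∀ n : ℕ, 1 ≤ n → h ≠ -(n : ℂ) ∨ f = (n : ℂ))
    (p : Submodule ℂ Mmod)
    (hcpI : ∀ v ∈ p, cp h f v ∈ p) (hcmI : ∀ v ∈ p, cm h f v ∈ p)
    (K : ℕ) (hK : 1 ≤ K) (w : Mmod) (hwp : w ∈ p) (hwne : w ≠ 0)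
    (hcl : ∀ j, w j ≠ 0 → j = ((K,0,0):Idx) ∨ j = ((K-1,1,1):Idx)) :
    ∃ u ∈ p, u ≠ 0 ∧ ∀ j : Idx, u j ≠ 0 → 2*j.1 + (j.2.1:ℕ) + (j.2.2:ℕ) ≤ 2*K - 1 := by
  set a := w (K,0,0) with hadef
  set b := w (K-1,1,1) with hbdef
  have hxy : ((K,0,0):Idx) ≠ ((K-1,1,1):Idx) := by simp
  have hrepr : w = a • e K 0 0 + b • e (K-1) 1 1 := pair_repr' w K 0 0 (K-1) 1 1 hxy hcl
  have hKc : ((K-1:ℕ):ℂ) = (K:ℂ) - 1 := by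
    push_cast [hK]
    ring
  have hcpw : cp h f w = (a*(2*(K:ℂ)) + b*(2*(h+2*((K-1:ℕ):ℂ)+2-f))) • e (K-1) 0 1 := by
    rw [hrepr, map_add, map_smul, map_smul, cp_e00, cp_e11, smul_smul, smul_smul, ← add_smul]
  have hcmw : cm h f w = (a*(2*(K:ℂ)) + b*(-(2*(h+f)))) • e (K-1) 1 0 := by
    rw [hrepr, map_add, map_smul, map_smul, cm_e00, cm_e11, smul_smul, smul_smul, ← add_smul]
  by_cases hA : a*(2*(K:ℂ)) + b*(2*(h+2*((K-1:ℕ):ℂ)+2-f)) = 0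
  · by_cases hB : a*(2*(K:ℂ)) + b*(-(2*(h+f))) = 0
    · exfalso
      have hKne : (K:ℂ) ≠ 0 := Nat.cast_ne_zero.mpr (by omega)
      have hhK : h + (K:ℂ) ≠ 0 := by
        rcases h3 K hK with hh | hh
        · intro hc
          exact hh (by linear_combination hc)
        · intro hc
          exact h2 (by rw [hh]; linear_combination hc)
      rw [hKc] at hA
      have hb0 : b = 0 := by
        have h4 : b * (4*(h+(K:ℂ))) = 0 := by linear_combination hA - hB
        rcases mul_eq_zero.mp h4 with hc | hc
        · exact hc
        · exact absurd (by linear_combination hc/4 : h + (K:ℂ) = 0) hhK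
      have ha0 : a = 0 := by
        rw [hb0, zero_mul, add_zero] at hB
        rcases mul_eq_zero.mp hB with hc | hc
        · exact hc
        · exact absurd hc (mul_ne_zero two_ne_zero hKne)
      exact hwne (by rw [hrepr, ha0, hb0, zero_smul, zero_smul, add_zero])
    · refine ⟨cm h f w, hcmI w hwp, ?_, ?_⟩
      · rw [hcmw]
        exact smul_ne_zero hB (e_ne_zero _ _ _)
      · intro j hj
        rw [hcmw] at hj
        have := smul_e_support _ _ _ _ _ hj
        subst this
        simp <;> omega
  · refine ⟨cp h f w, hcpI w hwp, ?_, ?_⟩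
    · rw [hcpw]
      exact smul_ne_zero hA (e_ne_zero _ _ _)
    · intro j hj
      rw [hcpw] at hj
      have := smul_e_support _ _ _ _ _ hj
      subst this
      simp <;> omega

end VermaAux
namespace VermaAux

lemma descend (h f : ℂ) (h1 : h ≠ f) (h2 : h ≠ -f)
    (h3 : ∀ n : ℕ, 1 ≤ n → h ≠ -(n : ℂ) ∨ f = (n : ℂ))
    (p : Submodule ℂ Mmod)
    (hN : ∀ v ∈ p, Nop h v ∈ p) (hF : ∀ v ∈ p, Fop f v ∈ p)
    (hcpI : ∀ v ∈ p, cp h f v ∈ p) (hcmI : ∀ v ∈ p, cm h f v ∈ p) :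
    ∀ (m : ℕ) (v : Mmod), v ∈ p → v ≠ 0 →
      (∀ j : Idx, v j ≠ 0 → 2*j.1 + (j.2.1:ℕ) + (j.2.2:ℕ) ≤ m) → e 0 0 0 ∈ p := by
  have hhf : h + f ≠ 0 := fun hc => h2 (by linear_combination hc)
  intro m
  induction m using Nat.strong_induction_on with
  | _ m ih =>
    intro v hvp hvne hlev
    obtain ⟨i, hi⟩ := Finsupp.support_nonempty_iff.mpr hvne
    have hvi : v i ≠ 0 := Finsupp.mem_support_iff.mp hi
    obtain ⟨w, hwp, hwi, hwsupp⟩ := extract_component h f p hN hF v hvp i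
    have hwine : w i ≠ 0 := by rw [hwi]; exact hvi
    have hwne : w ≠ 0 := fun h0 => hwine (by rw [h0]; rfl)
    have hmi : 2*i.1 + (i.2.1:ℕ) + (i.2.2:ℕ) ≤ m := hlev i hvi
    obtain ⟨k, μ, ν⟩ := i
    rcases fin2_cases μ with rfl | rfl <;> rcases fin2_cases ν with rfl | rfl
    · -- i = (k,0,0)
      simp at hmi
      rcases Nat.eq_zero_or_pos k with rfl | hk1
      · have hcl : ∀ j, w j ≠ 0 → j = ((0,0,0):Idx) := by
          intro j hj
          obtain ⟨-, hn, hz⟩ := hwsupp j hj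
          obtain ⟨jk, jm, jn⟩ := j
          simp at hn hz
          have h2m := jm.isLt
          have h2n := jn.isLt
          exact idx_eq _ _ _ _ _ _ (by omega) (by omega) (by omega)
        obtain ⟨C, hC, hCne⟩ : ∃ C : ℂ, w = C • e 0 0 0 ∧ C ≠ 0 :=
          ⟨w (0,0,0), single_repr' w 0 0 0 hcl, hwine⟩
        have hmem := p.smul_mem C⁻¹ hwp
        rwa [hC, smul_smul, inv_mul_cancel₀ hCne, one_smul] at hmem
      · have hcl : ∀ j, w j ≠ 0 → j = ((k,0,0):Idx) ∨ j = ((k-1,1,1):Idx) := by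
          intro j hj
          obtain ⟨-, hn, hz⟩ := hwsupp j hj
          obtain ⟨jk, jm, jn⟩ := j
          simp at hn hz
          have h2m := jm.isLt
          have h2n := jn.isLt
          rcases (by omega : (jk = k ∧ (jm:ℕ) = 0 ∧ (jn:ℕ) = 0) ∨
              (jk = k-1 ∧ (jm:ℕ) = 1 ∧ (jn:ℕ) = 1)) with ⟨e1,e2,e3⟩ | ⟨e1,e2,e3⟩
          · exact Or.inl (idx_eq _ _ _ _ _ _ e1 e2 e3)
          · exact Or.inr (idx_eq _ _ _ _ _ _ e1 e2 e3)
        obtain ⟨u, hup, hune, hub⟩ := even_case h f h2 h3 p hcpI hcmI k hk1 w hwp hwne hcl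
        exact ih (2*k-1) (by omega) u hup hune hub
    · -- i = (k,0,1)
      simp at hmi
      have hcl : ∀ j, w j ≠ 0 → j = ((k,0,1):Idx) := by
        intro j hj
        obtain ⟨-, hn, hz⟩ := hwsupp j hj
        obtain ⟨jk, jm, jn⟩ := j
        simp at hn hz
        have h2m := jm.isLt
        have h2n := jn.isLt
        exact idx_eq _ _ _ _ _ _ (by omega) (by omega) (by omega)
      obtain ⟨u, hup, hune, hub⟩ := odd01_case h f hhf p hcmI k w hwp hwine hcl
      exact ih (2*k) (by omega) u hup hune hub
    · -- i = (k,1,0)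
      simp at hmi
      have hcl : ∀ j, w j ≠ 0 → j = ((k,1,0):Idx) := by
        intro j hj
        obtain ⟨-, hn, hz⟩ := hwsupp j hj
        obtain ⟨jk, jm, jn⟩ := j
        simp at hn hz
        have h2m := jm.isLt
        have h2n := jn.isLt
        exact idx_eq _ _ _ _ _ _ (by omega) (by omega) (by omega)
      obtain ⟨u, hup, hune, hub⟩ := odd10_case h f h1 p hcpI k w hwp hwine hcl
      exact ih (2*k) (by omega) u hup hune hub
    · -- i = (k,1,1)
      simp at hmi
      have hcl : ∀ j, w j ≠ 0 → j = ((k+1,0,0):Idx) ∨ j = ((k+1-1,1,1):Idx) := by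
        intro j hj
        obtain ⟨-, hn, hz⟩ := hwsupp j hj
        obtain ⟨jk, jm, jn⟩ := j
        simp at hn hz
        have h2m := jm.isLt
        have h2n := jn.isLt
        rcases (by omega : (jk = k+1 ∧ (jm:ℕ) = 0 ∧ (jn:ℕ) = 0) ∨
            (jk = k+1-1 ∧ (jm:ℕ) = 1 ∧ (jn:ℕ) = 1)) with ⟨e1,e2,e3⟩ | ⟨e1,e2,e3⟩
        · exact Or.inl (idx_eq _ _ _ _ _ _ e1 e2 e3)
        · exact Or.inr (idx_eq _ _ _ _ _ _ e1 e2 e3)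
      obtain ⟨u, hup, hune, hub⟩ :=
        even_case h f h2 h3 p hcpI hcmI (k+1) (by omega) w hwp hwne hcl
      exact ih (2*(k+1)-1) (by omega) u hup hune hub

end VermaAux

/-- Corollary 3.4: if `h ≠ ±f` and, for every positive integer `n`, `h ≠ −n` or
`f = n`, then the Verma module `M(h,f)` is irreducible: its only subspaces
invariant under `N`, `F̃`, `A₊`, `A₋`, `c₊`, `c₋`, `d₊`, `d₋` are `⊥` and `⊤`. -/
theorem verma_module_irreducible (h f : ℂ)
    (h1 : h ≠ f) (h2 : h ≠ -f)
    (h3 : ∀ n : ℕ, 1 ≤ n → h ≠ -(n : ℂ) ∨ f = (n : ℂ))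
    (p : Submodule ℂ Mmod)
    (hN : ∀ v ∈ p, Nop h v ∈ p) (hF : ∀ v ∈ p, Fop f v ∈ p)
    (hAp : ∀ v ∈ p, Ap v ∈ p) (hAm : ∀ v ∈ p, Am h f v ∈ p)
    (hcp : ∀ v ∈ p, cp h f v ∈ p) (hcm : ∀ v ∈ p, cm h f v ∈ p)
    (hdp : ∀ v ∈ p, dp v ∈ p) (hdm : ∀ v ∈ p, dm v ∈ p) :
    p = ⊥ ∨ p = ⊤ := by
  classical
  by_cases hbot : p = ⊥
  · exact Or.inl hbot
  · right
    obtain ⟨v, hvp, hvne⟩ := (Submodule.ne_bot_iff p).mp hbot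
    have he000 : e 0 0 0 ∈ p := by
      apply VermaAux.descend h f h1 h2 h3 p hN hF hcp hcm
        (v.support.sup (fun j => 2*j.1 + (j.2.1:ℕ) + (j.2.2:ℕ))) v hvp hvne
      intro j hj
      exact Finset.le_sup (f := fun j : Idx => 2*j.1 + (j.2.1:ℕ) + (j.2.2:ℕ))
        (Finsupp.mem_support_iff.mpr hj)
    have h00 : ∀ k : ℕ, e k 0 0 ∈ p := by
      intro k
      induction k with
      | zero => exact he000
      | succ k ihk =>
        have hmem := hAp _ ihk
        rwa [VermaAux.Ap_e] at hmem
    have hall : ∀ (k : ℕ) (μ ν : Fin 2), e k μ ν ∈ p := by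
      intro k μ ν
      rcases VermaAux.fin2_cases μ with rfl | rfl <;>
        rcases VermaAux.fin2_cases ν with rfl | rfl
      · exact h00 k
      · have hmem := hdm _ (h00 k)
        rwa [VermaAux.dm_e00] at hmem
      · have hmem := hdp _ (h00 k)
        rwa [VermaAux.dp_e0] at hmem
      · have h01 := hdm _ (h00 k)
        rw [VermaAux.dm_e00] at h01
        have hmem := hdp _ h01
        rwa [VermaAux.dp_e0] at hmem
    apply Submodule.eq_top_iff'.mpr
    intro u
    induction u using Finsupp.induction_linear with
    | zero => exact p.zero_mem
    | add a b ha hb => exact p.add_mem ha hb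
    | single j c =>
      have hrepr : Finsupp.single j c = c • e j.1 j.2.1 j.2.2 := by
        simp [e, Finsupp.smul_single]
      rw [hrepr]
      exact p.smul_mem _ (hall j.1 j.2.1 j.2.2)
end
end

section
/- (Verma module realizes the relation {c₊, c₋} = 2A₋) As linear operators on M, the anticommutator identity c₊ ∘ c₋ + c₋ ∘ c₊ = 2·A₋ holds. -/
/-!
Verma module `M(h,f)` over the ℤ₂×ℤ₂ graded superalgebra of Rittenberg–Wyler,
realized on the space of finitely supported functions `ℕ × Fin 2 × Fin 2 →₀ ℂ`,
with basis vectors `e k μ ν`.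
-/

noncomputable section

lemma mkOp_single (φ : Idx → Mmod) (p : Idx) : mkOp φ (Finsupp.single p 1) = φ p := by
  simp [mkOp]

lemma mkOp_single' (φ : Idx → Mmod) (p : Idx) (a : ℂ) :
    mkOp φ (Finsupp.single p a) = a • φ p := by
  simp [mkOp]

lemma e_def (k : ℕ) (μ ν : Fin 2) : e k μ ν = Finsupp.single (k, μ, ν) 1 := rfl

/-- The Verma module realizes the relation `{c₊, c₋} = 2A₋`. -/
theorem anticommutator_cp_cm (h f : ℂ) :
    cp h f ∘ₗ cm h f + cm h f ∘ₗ cp h f = (2 : ℂ) • Am h f := by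
  apply Finsupp.lhom_ext
  intro p c
  obtain ⟨k, μ, ν⟩ := p
  have hc : Finsupp.single ((k, μ, ν) : Idx) c = c • e k μ ν := by
    rw [e_def, Finsupp.smul_single, smul_eq_mul, mul_one]
  rw [hc]
  simp only [map_smul]
  congr 1
  fin_cases μ <;> fin_cases ν <;> cases k with
  | zero =>
    simp only [LinearMap.add_apply, LinearMap.comp_apply, LinearMap.smul_apply,
      Am, cp, cm, e_def, mkOp_single, mkOp_single', Fin.isValue, reduceIte,
      Fin.val_zero, Fin.val_one, pow_zero, pow_one, Nat.cast_zero, Nat.cast_one,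
      one_smul, neg_smul, one_mul, neg_mul, map_add, map_smul, map_neg, map_zero,
      smul_zero, add_zero, zero_add, smul_add, smul_smul, smul_neg,
      Finsupp.smul_single, smul_eq_mul, mul_one, mul_zero, zero_mul, neg_zero,
      zero_smul, Finsupp.single_zero, Nat.zero_sub, zero_ne_one, one_ne_zero,
      if_true, if_false, eq_self_iff_true, and_self, and_true, true_and,
      and_false, false_and, Fin.zero_eta, Fin.mk_one]
    all_goals
    · ext q
      obtain ⟨j, a, b⟩ := q
      fin_cases a <;> fin_cases b <;>
      simp only [Finsupp.add_apply, Finsupp.neg_apply, Finsupp.single_apply,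
        Finsupp.coe_zero, Pi.zero_apply, Prod.mk.injEq, Fin.isValue, Fin.zero_eta,
        map_zero, LinearMap.map_zero, smul_zero, Finsupp.coe_smul, Pi.smul_apply,
        Fin.mk_one, one_ne_zero, zero_ne_one, and_true, and_false, true_and,
        false_and, and_self, if_false, if_true, ite_self, neg_zero, add_zero,
        zero_add] <;>
      (try split_ifs) <;> first | rfl | ring | omega
  | succ n =>
    simp only [LinearMap.add_apply, LinearMap.comp_apply, LinearMap.smul_apply,
      Am, cp, cm, e_def, mkOp_single, mkOp_single', Fin.isValue, reduceIte,
      Fin.val_zero, Fin.val_one, pow_zero, pow_one, Nat.cast_zero, Nat.cast_one,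
      one_smul, neg_smul, one_mul, neg_mul, map_add, map_smul, map_neg, map_zero,
      smul_zero, add_zero, zero_add, smul_add, smul_smul, smul_neg,
      Finsupp.smul_single, smul_eq_mul, mul_one, mul_zero, zero_mul, neg_zero,
      zero_smul, Nat.succ_sub_one, Nat.cast_add, Nat.cast_one, Nat.one_add,
      zero_ne_one, one_ne_zero, if_true, if_false, eq_self_iff_true, and_self,
      and_true, true_and, and_false, false_and, Fin.zero_eta, Fin.mk_one]
    all_goals
    · ext q
      obtain ⟨j, a, b⟩ := q
      fin_cases a <;> fin_cases b <;>
      simp only [Finsupp.add_apply, Finsupp.neg_apply, Finsupp.single_apply,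
        Finsupp.coe_zero, Pi.zero_apply, Prod.mk.injEq, Fin.isValue, Fin.zero_eta,
        map_zero, LinearMap.map_zero, smul_zero, Finsupp.coe_smul, Pi.smul_apply,
        Fin.mk_one, one_ne_zero, zero_ne_one, and_true, and_false, true_and,
        false_and, and_self, if_false, if_true, ite_self, neg_zero, add_zero,
        zero_add] <;>
      (try split_ifs) <;> first | rfl | ring | omega
end
end

section
/- (Verma module realizes the sl(2) relations) As linear operators on M, the commutator identities A₋ ∘ A₊ − A₊ ∘ A₋ = 4·N, A₋ ∘ N − N ∘ A₋ = 2·A₋, and A₊ ∘ N − N ∘ A₊ = −2·A₊ hold. -/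
/-!
Verma module `M(h,f)` over the ℤ₂×ℤ₂ graded superalgebra of Rittenberg–Wyler,
realized on the space of finitely supported functions `ℕ × Fin 2 × Fin 2 →₀ ℂ`,
with basis vectors `e k μ ν`.
-/

noncomputable section

lemma op_ext {F G : Mmod →ₗ[ℂ] Mmod}
    (H : ∀ k μ ν, F (e k μ ν) = G (e k μ ν)) : F = G := by
  apply Finsupp.lhom_ext
  rintro ⟨k, μ, ν⟩ b
  have hb : (Finsupp.single (k, μ, ν) b : Mmod) = b • e k μ ν := by
    simp [e, Finsupp.smul_single]
  rw [hb, map_smul, map_smul, H]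

/-- The Verma module realizes the `sl(2)` relations:
`[A₋,A₊] = 4N`, `[A₋,N] = 2A₋`, `[A₊,N] = −2A₊`. -/
theorem sl2_relations (h f : ℂ) :
    Am h f ∘ₗ Ap - Ap ∘ₗ Am h f = (4 : ℂ) • Nop h ∧
    Am h f ∘ₗ Nop h - Nop h ∘ₗ Am h f = (2 : ℂ) • Am h f ∧
    Ap ∘ₗ Nop h - Nop h ∘ₗ Ap = (-2 : ℂ) • Ap := by
  have Am_e : ∀ k (μ ν : Fin 2), Am h f (e k μ ν) =
      (4 * (k : ℂ) * (h + (k : ℂ) + ((μ : ℕ) : ℂ) + ((ν : ℕ) : ℂ) - 1)) • e (k - 1) μ ν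
        + (if μ = 1 ∧ ν = 1 then (4 * (h + f)) • e k 0 0 else 0) :=
    fun k μ ν => mkOp_e _ k μ ν
  have Ap_e : ∀ k (μ ν : Fin 2), Ap (e k μ ν) = e (k + 1) μ ν := fun k μ ν => mkOp_e _ k μ ν
  have N_e : ∀ k (μ ν : Fin 2), Nop h (e k μ ν) =
      (h + 2 * (k : ℂ) + ((μ : ℕ) : ℂ) + ((ν : ℕ) : ℂ)) • e k μ ν :=
    fun k μ ν => mkOp_e _ k μ ν
  refine ⟨?_, ?_, ?_⟩ <;>
  · apply op_ext
    intro k μ ν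
    fin_cases μ <;> fin_cases ν <;> cases k <;>
      simp only [LinearMap.sub_apply, LinearMap.comp_apply, LinearMap.smul_apply,
        Am_e, Ap_e, N_e, map_add, map_smul, map_zero, Nat.add_sub_cancel,
        Nat.zero_sub, Nat.succ_sub_one, Fin.mk_one, Fin.zero_eta, Fin.isValue,
        if_true, and_self, Fin.val_zero, Fin.val_one, Nat.cast_zero, Nat.cast_one,
        Nat.cast_add, Nat.cast_succ, Fin.one_eq_zero_iff, Fin.zero_eq_one_iff,
        and_false, false_and, if_false, Nat.cast_ofNat, ite_true, ite_false,
        smul_zero, add_zero, zero_add, one_ne_zero, OfNat.ofNat_ne_one] <;>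
      simp <;> push_cast <;> module
end
end
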